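/- Let G be a finite graph with symmetric edge weights, Ω a finite subset of vertices with at least two boundary vertices, and λ_1(Ω) the first nontrivial eigenvalue of the Dirichlet-to-Neumann operator Λ on δΩ. Then for arbitrary positive constants a > 0 and k > 0, λ_1(Ω) ≥ ( (2 h_E(Ω̃) μ_1(k) − a(k + μ_1(k))) a ) / ( a² + 2 μ_1(k) ), where μ_1(k) = inf over nonzero φ : Ω̄ → ℝ of ( D_Ω(φ) + k Σ_{x∈δΩ} φ(x)² m_x ) / ( Σ_{x∈Ω} φ(x)² m_x ) is the first eigenvalue of the Robin problem Δu + μ_1(k)u = 0 on Ω, ∂u/∂n + ku = 0 on δΩ. -/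

import Mathlib

open scoped Classical
open Finset

variable {V : Type*} [Fintype V]

/-- The vertex boundary δΩ of a finite set Ω of vertices. -/
noncomputable def bdry (μ : V → V → ℝ) (Ω : Finset V) : Finset V :=
  Finset.univ.filter fun x => x ∉ Ω ∧ ∃ y ∈ Ω, 0 < μ x y

/-- Ω̄ = Ω ∪ δΩ. -/
noncomputable def clos (μ : V → V → ℝ) (Ω : Finset V) : Finset V :=
  Ω ∪ bdry μ Ω

/-- The vertex measure m on Ω̄. -/
noncomputable def vm (μ : V → V → ℝ) (Ω : Finset V) (x : V) : ℝ :=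
  if x ∈ Ω then ∑ y, μ x y else ∑ y ∈ Ω, μ x y

/-- m(B) = Σ_{x ∈ B} m_x. -/
noncomputable def msum (μ : V → V → ℝ) (Ω : Finset V) (B : Finset V) : ℝ :=
  ∑ x ∈ B, vm μ Ω x

/-- Sum over the edges e = {x,y} of E(Ω,Ω̄) of μ_{xy} · F x y (for symmetric F). -/
noncomputable def edgeSum (μ : V → V → ℝ) (Ω : Finset V) (F : V → V → ℝ) : ℝ :=
  (∑ x ∈ Ω, ∑ y ∈ Ω, μ x y * F x y) / 2 +
    ∑ x ∈ Ω, ∑ y ∈ bdry μ Ω, μ x y * F x y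

/-- Dirichlet energy D_Ω(f). -/
noncomputable def dirichlet (μ : V → V → ℝ) (Ω : Finset V) (f : V → ℝ) : ℝ :=
  edgeSum μ Ω fun x y => (f x - f y) ^ 2

/-- Dirichlet form D_Ω(f,g). -/
noncomputable def dform (μ : V → V → ℝ) (Ω : Finset V) (f g : V → ℝ) : ℝ :=
  edgeSum μ Ω fun x y => (f x - f y) * (g x - g y)

/-- μ(∂_Ω A): total weight of the edges of E(Ω,Ω̄) with exactly one endpoint in A. -/
noncomputable def cut (μ : V → V → ℝ) (Ω : Finset V) (A : Finset V) : ℝ :=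
  edgeSum μ Ω fun x y => if (x ∈ A) ↔ (y ∈ A) then 0 else 1

/-- The graph Laplacian Δf(x) (used for x ∈ Ω). -/
noncomputable def lap (μ : V → V → ℝ) (Ω : Finset V) (f : V → ℝ) (x : V) : ℝ :=
  (∑ y, μ x y * (f y - f x)) / vm μ Ω x

/-- The outward normal derivative ∂f/∂n(z) (used for z ∈ δΩ). -/
noncomputable def nderiv (μ : V → V → ℝ) (Ω : Finset V) (f : V → ℝ) (z : V) : ℝ :=
  (∑ x ∈ Ω, μ z x * (f z - f x)) / vm μ Ω z

/-- f is harmonic on Ω. -/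
def IsHarmonic (μ : V → V → ℝ) (Ω : Finset V) (u : V → ℝ) : Prop :=
  ∀ x ∈ Ω, lap μ Ω u x = 0

/-- Adjacency in the graph Ω̃ = (Ω̄, E(Ω,Ω̄)). -/
def tilAdj (μ : V → V → ℝ) (Ω : Finset V) (x y : V) : Prop :=
  0 < μ x y ∧ (x ∈ Ω ∨ y ∈ Ω)

/-- The graph Ω̃ is connected. -/
def TilConnected (μ : V → V → ℝ) (Ω : Finset V) : Prop :=
  ∀ x ∈ clos μ Ω, ∀ y ∈ clos μ Ω, Relation.ReflTransGen (tilAdj μ Ω) x y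

/-- λ₁(Ω): the first nontrivial eigenvalue of the Dirichlet-to-Neumann operator,
characterized by its Rayleigh quotient. -/
noncomputable def lambda1 (μ : V → V → ℝ) (Ω : Finset V) : ℝ :=
  sInf { r : ℝ | ∃ u : V → ℝ, IsHarmonic μ Ω u ∧
    (∑ x ∈ bdry μ Ω, u x ^ 2 * vm μ Ω x) = 1 ∧
    (∑ x ∈ bdry μ Ω, u x * vm μ Ω x) = 0 ∧
    r = dirichlet μ Ω u }

/-- The Escobar-type Cheeger constant h_E(Ω̃). -/
noncomputable def hE (μ : V → V → ℝ) (Ω : Finset V) : ℝ :=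
  sInf { r : ℝ | ∃ A : Finset V, A ⊆ clos μ Ω ∧
    0 < msum μ Ω (A ∩ bdry μ Ω) ∧
    msum μ Ω (A ∩ bdry μ Ω) ≤ msum μ Ω (bdry μ Ω) / 2 ∧
    r = cut μ Ω A / msum μ Ω (A ∩ bdry μ Ω) }

/-- The Jammes-type Cheeger constant h_J(Ω̃). -/
noncomputable def hJ (μ : V → V → ℝ) (Ω : Finset V) : ℝ :=
  sInf { r : ℝ | ∃ A : Finset V, A ⊆ clos μ Ω ∧
    (A ∩ bdry μ Ω).Nonempty ∧
    msum μ Ω A ≤ msum μ Ω (clos μ Ω) / 2 ∧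
    r = cut μ Ω A / msum μ Ω (A ∩ bdry μ Ω) }

/-- The classical Cheeger constant h(Ω̃). -/
noncomputable def cheeger (μ : V → V → ℝ) (Ω : Finset V) : ℝ :=
  sInf { r : ℝ | ∃ A : Finset V, A ⊆ clos μ Ω ∧ A.Nonempty ∧
    msum μ Ω A ≤ msum μ Ω (clos μ Ω) / 2 ∧
    r = cut μ Ω A / msum μ Ω A }

/-- μ₁(k): the first eigenvalue of the Robin problem, via its Rayleigh quotient. -/
noncomputable def mu1 (μ : V → V → ℝ) (Ω : Finset V) (k : ℝ) : ℝ :=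
  sInf { r : ℝ | ∃ φ : V → ℝ, 0 < (∑ x ∈ Ω, φ x ^ 2 * vm μ Ω x) ∧
    r = (dirichlet μ Ω φ + k * ∑ x ∈ bdry μ Ω, φ x ^ 2 * vm μ Ω x) /
          (∑ x ∈ Ω, φ x ^ 2 * vm μ Ω x) }
section Aux

variable {μ : V → V → ℝ} {Ω : Finset V}

lemma mem_bdry' {x : V} : x ∈ bdry μ Ω ↔ x ∉ Ω ∧ ∃ y ∈ Ω, 0 < μ x y := by
  simp [bdry]

lemma Omega_subset_clos : Ω ⊆ clos μ Ω := Finset.subset_union_left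

lemma bdry_subset_clos : bdry μ Ω ⊆ clos μ Ω := Finset.subset_union_right

lemma not_mem_Omega_of_bdry {x : V} (hx : x ∈ bdry μ Ω) : x ∉ Ω :=
  (mem_bdry'.mp hx).1

lemma vm_nonneg (hnn : ∀ x y, 0 ≤ μ x y) (x : V) : 0 ≤ vm μ Ω x := by
  unfold vm
  split <;> exact Finset.sum_nonneg fun y _ => hnn _ _

lemma vm_pos_bdry (hnn : ∀ x y, 0 ≤ μ x y) {x : V} (hx : x ∈ bdry μ Ω) :
    0 < vm μ Ω x := by
  obtain ⟨hxΩ, y, hy, hμ⟩ := mem_bdry'.mp hx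
  unfold vm
  rw [if_neg hxΩ]
  exact Finset.sum_pos' (fun z _ => hnn _ _) ⟨y, hy, hμ⟩

lemma msum_nonneg (hnn : ∀ x y, 0 ≤ μ x y) (B : Finset V) : 0 ≤ msum μ Ω B :=
  Finset.sum_nonneg fun x _ => vm_nonneg hnn x

lemma mu_zero_of_not_clos (hsym : ∀ x y, μ x y = μ y x) (hnn : ∀ x y, 0 ≤ μ x y)
    {x y : V} (hx : x ∈ Ω) (hy : y ∉ clos μ Ω) : μ x y = 0 := by
  by_contra h
  have hpos : 0 < μ y x := by
    rw [← hsym x y]; exact lt_of_le_of_ne (hnn x y) (Ne.symm h)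
  have hyΩ : y ∉ Ω := fun hyy => hy (Omega_subset_clos hyy)
  exact hy (bdry_subset_clos (mem_bdry'.mpr ⟨hyΩ, x, hx, hpos⟩))

lemma edgeSum_congr {F G : V → V → ℝ}
    (h : ∀ x ∈ Ω, ∀ y ∈ clos μ Ω, F x y = G x y) :
    edgeSum μ Ω F = edgeSum μ Ω G := by
  unfold edgeSum
  congr 1
  · congr 1
    exact Finset.sum_congr rfl fun x hx => Finset.sum_congr rfl fun y hy => by
      rw [h x hx y (Omega_subset_clos hy)]
  · exact Finset.sum_congr rfl fun x hx => Finset.sum_congr rfl fun y hy => by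
      rw [h x hx y (bdry_subset_clos hy)]

lemma edgeSum_mono (hnn : ∀ x y, 0 ≤ μ x y) {F G : V → V → ℝ}
    (h : ∀ x ∈ Ω, ∀ y ∈ clos μ Ω, F x y ≤ G x y) :
    edgeSum μ Ω F ≤ edgeSum μ Ω G := by
  unfold edgeSum
  have h1 : ∀ x ∈ Ω, ∀ y ∈ clos μ Ω, μ x y * F x y ≤ μ x y * G x y := fun x hx y hy =>
    mul_le_mul_of_nonneg_left (h x hx y hy) (hnn x y)
  have hs1 : ∑ x ∈ Ω, ∑ y ∈ Ω, μ x y * F x y ≤ ∑ x ∈ Ω, ∑ y ∈ Ω, μ x y * G x y :=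
    Finset.sum_le_sum fun x hx => Finset.sum_le_sum fun y hy =>
      h1 x hx y (Omega_subset_clos hy)
  have hs2 : ∑ x ∈ Ω, ∑ y ∈ bdry μ Ω, μ x y * F x y ≤
      ∑ x ∈ Ω, ∑ y ∈ bdry μ Ω, μ x y * G x y :=
    Finset.sum_le_sum fun x hx => Finset.sum_le_sum fun y hy =>
      h1 x hx y (bdry_subset_clos hy)
  linarith

lemma edgeSum_nonneg (hnn : ∀ x y, 0 ≤ μ x y) {F : V → V → ℝ}
    (h : ∀ x ∈ Ω, ∀ y ∈ clos μ Ω, 0 ≤ F x y) :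
    0 ≤ edgeSum μ Ω F := by
  have := edgeSum_mono (Ω := Ω) hnn h
  simpa [edgeSum] using this

lemma edgeSum_add (F G : V → V → ℝ) :
    edgeSum μ Ω (fun x y => F x y + G x y) = edgeSum μ Ω F + edgeSum μ Ω G := by
  unfold edgeSum
  simp only [mul_add, Finset.sum_add_distrib]
  ring

lemma edgeSum_smul (c : ℝ) (F : V → V → ℝ) :
    edgeSum μ Ω (fun x y => c * F x y) = c * edgeSum μ Ω F := by
  have key : ∀ s t : Finset V, ∑ x ∈ s, ∑ y ∈ t, μ x y * (c * F x y)
      = c * ∑ x ∈ s, ∑ y ∈ t, μ x y * F x y := by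
    intro s t
    rw [Finset.mul_sum]
    refine Finset.sum_congr rfl fun x _ => ?_
    rw [Finset.mul_sum]
    exact Finset.sum_congr rfl fun y _ => by ring
  unfold edgeSum
  rw [key, key]
  ring

end Aux
section AuxB

variable {μ : V → V → ℝ} {Ω : Finset V}

lemma dirichlet_nonneg (hnn : ∀ x y, 0 ≤ μ x y) (f : V → ℝ) :
    0 ≤ dirichlet μ Ω f :=
  edgeSum_nonneg hnn fun x _ y _ => sq_nonneg _

lemma cut_nonneg (hnn : ∀ x y, 0 ≤ μ x y) (A : Finset V) :
    0 ≤ cut μ Ω A :=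
  edgeSum_nonneg hnn fun x _ y _ => by split <;> norm_num

/-- Vertex-edge identity. -/
lemma edgeSum_pair (hsym : ∀ x y, μ x y = μ y x) (hnn : ∀ x y, 0 ≤ μ x y)
    (g : V → ℝ) :
    edgeSum μ Ω (fun x y => g x + g y) =
      ∑ x ∈ Ω, g x * vm μ Ω x + ∑ x ∈ bdry μ Ω, g x * vm μ Ω x := by
  unfold edgeSum
  have swap1 : ∑ x ∈ Ω, ∑ y ∈ Ω, μ x y * g y = ∑ x ∈ Ω, ∑ y ∈ Ω, μ x y * g x := by
    rw [Finset.sum_comm]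
    exact Finset.sum_congr rfl fun x _ => Finset.sum_congr rfl fun y _ => by
      rw [hsym]
  have e1 : ∑ x ∈ Ω, ∑ y ∈ Ω, μ x y * (g x + g y)
      = 2 * ∑ x ∈ Ω, g x * ∑ y ∈ Ω, μ x y := by
    have : ∀ x ∈ Ω, ∑ y ∈ Ω, μ x y * (g x + g y)
        = (∑ y ∈ Ω, μ x y * g x) + ∑ y ∈ Ω, μ x y * g y := by
      intro x _
      rw [← Finset.sum_add_distrib]
      exact Finset.sum_congr rfl fun y _ => by ring
    rw [Finset.sum_congr rfl this, Finset.sum_add_distrib, swap1, two_mul]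
    congr 1 <;>
    · refine Finset.sum_congr rfl fun x _ => ?_
      rw [Finset.mul_sum]
      exact Finset.sum_congr rfl fun y _ => by ring
  have e2 : ∑ x ∈ Ω, ∑ y ∈ bdry μ Ω, μ x y * (g x + g y)
      = (∑ x ∈ Ω, g x * ∑ y ∈ bdry μ Ω, μ x y) + ∑ y ∈ bdry μ Ω, g y * vm μ Ω y := by
    have : ∀ x ∈ Ω, ∑ y ∈ bdry μ Ω, μ x y * (g x + g y)
        = g x * (∑ y ∈ bdry μ Ω, μ x y) + ∑ y ∈ bdry μ Ω, μ x y * g y := by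
      intro x _
      rw [Finset.mul_sum, ← Finset.sum_add_distrib]
      exact Finset.sum_congr rfl fun y _ => by ring
    rw [Finset.sum_congr rfl this, Finset.sum_add_distrib]
    congr 1
    rw [Finset.sum_comm]
    refine Finset.sum_congr rfl fun y hy => ?_
    have hvm : vm μ Ω y = ∑ x ∈ Ω, μ y x := by
      unfold vm; rw [if_neg (not_mem_Omega_of_bdry hy)]
    rw [hvm, Finset.mul_sum]
    exact Finset.sum_congr rfl fun x _ => by rw [hsym x y]; ring
  rw [e1, e2]
  have e3 : ∀ x ∈ Ω, (∑ y ∈ Ω, μ x y) + ∑ y ∈ bdry μ Ω, μ x y = vm μ Ω x := by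
    intro x hx
    unfold vm
    rw [if_pos hx, ← Finset.sum_union (Finset.disjoint_left.mpr
      (fun a ha hb => not_mem_Omega_of_bdry hb ha))]
    exact Finset.sum_subset (Finset.subset_univ _) fun y _ hy =>
      mu_zero_of_not_clos hsym hnn hx hy
  have : (∑ x ∈ Ω, g x * ∑ y ∈ Ω, μ x y) + ∑ x ∈ Ω, g x * ∑ y ∈ bdry μ Ω, μ x y
      = ∑ x ∈ Ω, g x * vm μ Ω x := by
    rw [← Finset.sum_add_distrib]
    exact Finset.sum_congr rfl fun x hx => by rw [← mul_add, e3 x hx]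
  linarith

end AuxB
section AuxC

variable {μ : V → V → ℝ} {Ω : Finset V}

lemma edgeSum_eq_prodsum (F : V → V → ℝ) :
    edgeSum μ Ω F = ∑ p ∈ Ω ×ˢ clos μ Ω,
      (if p.2 ∈ Ω then μ p.1 p.2 / 2 else μ p.1 p.2) * F p.1 p.2 := by
  rw [Finset.sum_product]
  unfold edgeSum
  have : ∀ x ∈ Ω, ∑ y ∈ clos μ Ω, (if y ∈ Ω then μ x y / 2 else μ x y) * F x y
      = (∑ y ∈ Ω, μ x y * F x y / 2) + ∑ y ∈ bdry μ Ω, μ x y * F x y := by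
    intro x _
    unfold clos
    rw [Finset.sum_union (Finset.disjoint_left.mpr
      (fun a ha hb => not_mem_Omega_of_bdry hb ha))]
    congr 1
    · exact Finset.sum_congr rfl fun y hy => by rw [if_pos hy]; ring
    · exact Finset.sum_congr rfl fun y hy => by
        rw [if_neg (not_mem_Omega_of_bdry hy)]
  rw [Finset.sum_congr rfl this, Finset.sum_add_distrib, Finset.sum_div]
  congr 1
  exact Finset.sum_congr rfl fun x _ => by rw [Finset.sum_div]

lemma edgeSum_cauchy (hnn : ∀ x y, 0 ≤ μ x y) (F G : V → V → ℝ) :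
    (edgeSum μ Ω fun x y => F x y * G x y) ^ 2 ≤
      (edgeSum μ Ω fun x y => F x y ^ 2) * edgeSum μ Ω fun x y => G x y ^ 2 := by
  rw [edgeSum_eq_prodsum, edgeSum_eq_prodsum, edgeSum_eq_prodsum]
  set w : V × V → ℝ := fun p => if p.2 ∈ Ω then μ p.1 p.2 / 2 else μ p.1 p.2 with hw
  have hwnn : ∀ p, 0 ≤ w p := by
    intro p
    simp only [hw]
    split
    · exact div_nonneg (hnn _ _) (by norm_num)
    · exact hnn _ _
  have key := Finset.sum_mul_sq_le_sq_mul_sq (Ω ×ˢ clos μ Ω)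
    (fun p => Real.sqrt (w p) * F p.1 p.2) (fun p => Real.sqrt (w p) * G p.1 p.2)
  have e1 : ∀ p : V × V, (Real.sqrt (w p) * F p.1 p.2) * (Real.sqrt (w p) * G p.1 p.2)
      = w p * (F p.1 p.2 * G p.1 p.2) := by
    intro p
    have h : Real.sqrt (w p) ^ 2 = w p := Real.sq_sqrt (hwnn p)
    calc Real.sqrt (w p) * F p.1 p.2 * (Real.sqrt (w p) * G p.1 p.2)
        = Real.sqrt (w p) ^ 2 * (F p.1 p.2 * G p.1 p.2) := by ring
      _ = w p * (F p.1 p.2 * G p.1 p.2) := by rw [h]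
  have e2 : ∀ p : V × V, (Real.sqrt (w p) * F p.1 p.2) ^ 2 = w p * F p.1 p.2 ^ 2 := by
    intro p
    rw [mul_pow, Real.sq_sqrt (hwnn p)]
  have e3 : ∀ p : V × V, (Real.sqrt (w p) * G p.1 p.2) ^ 2 = w p * G p.1 p.2 ^ 2 := by
    intro p
    rw [mul_pow, Real.sq_sqrt (hwnn p)]
  calc (∑ p ∈ Ω ×ˢ clos μ Ω, w p * (F p.1 p.2 * G p.1 p.2)) ^ 2
      = (∑ p ∈ Ω ×ˢ clos μ Ω, (Real.sqrt (w p) * F p.1 p.2) *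
          (Real.sqrt (w p) * G p.1 p.2)) ^ 2 := by
        rw [Finset.sum_congr rfl fun p _ => (e1 p)]
    _ ≤ (∑ p ∈ Ω ×ˢ clos μ Ω, (Real.sqrt (w p) * F p.1 p.2) ^ 2) *
          ∑ p ∈ Ω ×ˢ clos μ Ω, (Real.sqrt (w p) * G p.1 p.2) ^ 2 := key
    _ = (∑ p ∈ Ω ×ˢ clos μ Ω, w p * F p.1 p.2 ^ 2) *
          ∑ p ∈ Ω ×ˢ clos μ Ω, w p * G p.1 p.2 ^ 2 := by
        rw [Finset.sum_congr rfl fun p _ => (e2 p),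
            Finset.sum_congr rfl fun p _ => (e3 p)]

end AuxC
section AuxD

variable {μ : V → V → ℝ} {Ω : Finset V}

lemma edgeSum_zero : edgeSum μ Ω (fun _ _ => (0:ℝ)) = 0 := by
  simp [edgeSum]

lemma cut_empty : cut μ Ω (∅ : Finset V) = 0 := by
  have : cut μ Ω (∅ : Finset V) = edgeSum μ Ω fun _ _ => (0:ℝ) :=
    edgeSum_congr fun x _ y _ => by simp
  rw [this, edgeSum_zero]

lemma coarea_aux (hsym : ∀ x y, μ x y = μ y x) (hnn : ∀ x y, 0 ≤ μ x y) (h : ℝ) :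
    ∀ n : ℕ, ∀ v : V → ℝ, (∀ x, 0 ≤ v x) →
    (∀ t : ℝ, 0 < t →
      h * msum μ Ω (((clos μ Ω).filter fun x => t ≤ v x) ∩ bdry μ Ω) ≤
        cut μ Ω ((clos μ Ω).filter fun x => t ≤ v x)) →
    (((clos μ Ω).filter fun x => 0 < v x).image v).card ≤ n →
    h * ∑ x ∈ bdry μ Ω, v x ^ 2 * vm μ Ω x ≤
      edgeSum μ Ω fun x y => |v x ^ 2 - v y ^ 2| := by
  intro n
  induction n with
  | zero =>
    intro v hv0 hcut hcard
    have himg : (((clos μ Ω).filter fun x => 0 < v x).image v) = ∅ :=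
      Finset.card_eq_zero.mp (Nat.le_zero.mp hcard)
    have hfe : ((clos μ Ω).filter fun x => 0 < v x) = ∅ := by
      by_contra hne
      obtain ⟨x, hx⟩ := Finset.nonempty_of_ne_empty hne
      exact Finset.notMem_empty _ (himg ▸ Finset.mem_image_of_mem v hx)
    have hzero : ∀ x ∈ clos μ Ω, v x = 0 := by
      intro x hx
      by_contra hne
      have hp : 0 < v x := lt_of_le_of_ne (hv0 x) (Ne.symm hne)
      exact Finset.notMem_empty x (hfe ▸ Finset.mem_filter.mpr ⟨hx, hp⟩)
    have : ∑ x ∈ bdry μ Ω, v x ^ 2 * vm μ Ω x = 0 :=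
      Finset.sum_eq_zero fun x hx => by rw [hzero x (bdry_subset_clos hx)]; ring
    rw [this, mul_zero]
    exact edgeSum_nonneg hnn fun x _ y _ => abs_nonneg _
  | succ n ih =>
    intro v hv0 hcut hcard
    by_cases hle : (((clos μ Ω).filter fun x => 0 < v x).image v).card ≤ n
    · exact ih v hv0 hcut hle
    push_neg at hle
    set I := ((clos μ Ω).filter fun x => 0 < v x).image v with hI
    have hne : I.Nonempty := Finset.card_pos.mp (by omega)
    set T := I.max' hne with hT
    have hTmem : T ∈ I := I.max'_mem hne
    have hTpos : 0 < T := by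
      obtain ⟨x, hx, hvx⟩ := Finset.mem_image.mp hTmem
      rw [← hvx]
      exact (Finset.mem_filter.mp hx).2
    have hvleT : ∀ x ∈ clos μ Ω, v x ≤ T := by
      intro x hx
      rcases lt_or_ge 0 (v x) with hp | hp
      · exact I.le_max' _ (Finset.mem_image_of_mem v (Finset.mem_filter.mpr ⟨hx, hp⟩))
      · linarith
    set J := insert (0:ℝ) (((clos μ Ω).filter fun x => 0 < v x ∧ v x < T).image v)
      with hJ
    have hJne : J.Nonempty := Finset.insert_nonempty _ _
    set s := J.max' hJne with hs
    have hs0 : 0 ≤ s := J.le_max' 0 (Finset.mem_insert_self _ _)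
    have hsT : s < T := by
      rw [hs, Finset.max'_lt_iff]
      intro b hb
      rcases Finset.mem_insert.mp hb with rfl | hb
      · exact hTpos
      · obtain ⟨x, hx, rfl⟩ := Finset.mem_image.mp hb
        exact (Finset.mem_filter.mp hx).2.2
    have hles : ∀ x ∈ clos μ Ω, v x < T → v x ≤ s := by
      intro x hx hlt
      rcases lt_or_ge 0 (v x) with hp | hp
      · exact J.le_max' _ (Finset.mem_insert_of_mem
          (Finset.mem_image_of_mem v (Finset.mem_filter.mpr ⟨hx, hp, hlt⟩)))
      · linarith
    set A := (clos μ Ω).filter (fun x => T ≤ v x) with hA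
    set v' : V → ℝ := fun x => min (v x) s with hv'
    have hvals : ∀ z ∈ clos μ Ω,
        (z ∈ A → v z = T ∧ v' z = s) ∧ (z ∉ A → v' z = v z ∧ v z ≤ s) := by
      intro z hz
      constructor
      · intro hzA
        have h1 : v z = T := le_antisymm (hvleT z hz) (Finset.mem_filter.mp hzA).2
        refine ⟨h1, ?_⟩
        show min (v z) s = s
        rw [h1]
        exact min_eq_right hsT.le
      · intro hzA
        have h1 : v z < T := by
          by_contra hc
          push_neg at hc
          exact hzA (Finset.mem_filter.mpr ⟨hz, hc⟩)
        have h2 : v z ≤ s := hles z hz h1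
        exact ⟨min_eq_left h2, h2⟩
    have keyF : ∀ x ∈ Ω, ∀ y ∈ clos μ Ω, |v x ^ 2 - v y ^ 2|
        = |v' x ^ 2 - v' y ^ 2|
          + (T ^ 2 - s ^ 2) * (if (x ∈ A) ↔ (y ∈ A) then 0 else 1) := by
      intro x hx y hy
      have hxc : x ∈ clos μ Ω := Omega_subset_clos hx
      have hx0 := hv0 x
      have hy0 := hv0 y
      by_cases hxA : x ∈ A <;> by_cases hyA : y ∈ A
      · obtain ⟨e1, e2⟩ := (hvals x hxc).1 hxA
        obtain ⟨f1, f2⟩ := (hvals y hy).1 hyA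
        rw [if_pos (iff_of_true hxA hyA), e1, e2, f1, f2]
        simp
      · obtain ⟨e1, e2⟩ := (hvals x hxc).1 hxA
        obtain ⟨f1, f2⟩ := (hvals y hy).2 hyA
        rw [if_neg (by simp [hxA, hyA]), e1, e2, f1]
        have h1 : v y ^ 2 ≤ s ^ 2 := by nlinarith
        have h2 : s ^ 2 ≤ T ^ 2 := by nlinarith
        rw [abs_of_nonneg (by linarith), abs_of_nonneg (by linarith)]
        ring
      · obtain ⟨e1, e2⟩ := (hvals x hxc).2 hxA
        obtain ⟨f1, f2⟩ := (hvals y hy).1 hyA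
        rw [if_neg (by simp [hxA, hyA]), e1, f1, f2]
        have h1 : v x ^ 2 ≤ s ^ 2 := by nlinarith
        have h2 : s ^ 2 ≤ T ^ 2 := by nlinarith
        rw [abs_of_nonpos (by linarith), abs_of_nonpos (by linarith)]
        ring
      · obtain ⟨e1, e2⟩ := (hvals x hxc).2 hxA
        obtain ⟨f1, f2⟩ := (hvals y hy).2 hyA
        rw [if_pos (iff_of_false hxA hyA), e1, f1]
        ring
    have eq1 : edgeSum μ Ω (fun x y => |v x ^ 2 - v y ^ 2|)
        = edgeSum μ Ω (fun x y => |v' x ^ 2 - v' y ^ 2|)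
          + (T ^ 2 - s ^ 2) * cut μ Ω A := by
      rw [edgeSum_congr keyF, edgeSum_add]
      congr 1
      unfold cut
      rw [← edgeSum_smul]
    have eq2 : ∑ x ∈ bdry μ Ω, v x ^ 2 * vm μ Ω x
        = (∑ x ∈ bdry μ Ω, v' x ^ 2 * vm μ Ω x)
          + (T ^ 2 - s ^ 2) * msum μ Ω (A ∩ bdry μ Ω) := by
      have split : ∀ x ∈ bdry μ Ω, v x ^ 2 * vm μ Ω x
          = v' x ^ 2 * vm μ Ω x
            + (if x ∈ A then (T ^ 2 - s ^ 2) * vm μ Ω x else 0) := by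
        intro x hx
        have hxc : x ∈ clos μ Ω := bdry_subset_clos hx
        by_cases hxA : x ∈ A
        · obtain ⟨e1, e2⟩ := (hvals x hxc).1 hxA
          rw [if_pos hxA, e1, e2]
          ring
        · obtain ⟨e1, e2⟩ := (hvals x hxc).2 hxA
          rw [if_neg hxA, e1]
          ring
      rw [Finset.sum_congr rfl split, Finset.sum_add_distrib]
      congr 1
      rw [← Finset.sum_filter]
      have : (bdry μ Ω).filter (fun x => x ∈ A) = A ∩ bdry μ Ω := by
        rw [Finset.filter_mem_eq_inter, Finset.inter_comm]
      rw [this]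
      unfold msum
      rw [Finset.mul_sum]
    have ineq3 : h * msum μ Ω (A ∩ bdry μ Ω) ≤ cut μ Ω A := by
      have := hcut T hTpos
      rw [← hA] at this
      exact this
    have hv'0 : ∀ x, 0 ≤ v' x := fun x => le_min (hv0 x) hs0
    have hcut' : ∀ t : ℝ, 0 < t →
        h * msum μ Ω (((clos μ Ω).filter fun x => t ≤ v' x) ∩ bdry μ Ω) ≤
          cut μ Ω ((clos μ Ω).filter fun x => t ≤ v' x) := by
      intro t ht
      by_cases hts : t ≤ s
      · have : ((clos μ Ω).filter fun x => t ≤ v' x)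
            = (clos μ Ω).filter fun x => t ≤ v x := by
          refine Finset.filter_congr fun x _ => ?_
          show t ≤ min (v x) s ↔ t ≤ v x
          rw [le_min_iff]
          exact ⟨fun h => h.1, fun h => ⟨h, hts⟩⟩
        rw [this]
        exact hcut t ht
      · push_neg at hts
        have : ((clos μ Ω).filter fun x => t ≤ v' x) = ∅ := by
          refine Finset.filter_eq_empty_iff.mpr fun x _ => ?_
          push_neg
          calc v' x ≤ s := min_le_right _ _
            _ < t := hts
        rw [this, cut_empty, Finset.empty_inter]
        simp [msum]
    have hsub : (((clos μ Ω).filter fun x => 0 < v' x).image v') ⊆ I.erase T := by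
      intro r hr
      obtain ⟨x, hx, rfl⟩ := Finset.mem_image.mp hr
      obtain ⟨hxc, hxp⟩ := Finset.mem_filter.mp hx
      rcases le_total (v x) s with hle2 | hle2
      · have hvv : v' x = v x := min_eq_left hle2
        rw [hvv] at hxp ⊢
        refine Finset.mem_erase.mpr ⟨ne_of_lt (lt_of_le_of_lt hle2 hsT), ?_⟩
        exact Finset.mem_image_of_mem v (Finset.mem_filter.mpr ⟨hxc, hxp⟩)
      · have hvv : v' x = s := min_eq_right hle2
        rw [hvv] at hxp ⊢
        have hsmem : s ∈ J := J.max'_mem hJne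
        rcases Finset.mem_insert.mp hsmem with h0 | hmem
        · exact absurd h0 (ne_of_gt hxp)
        · obtain ⟨z, hz, hzs⟩ := Finset.mem_image.mp hmem
          obtain ⟨hzc, hzp, _⟩ := Finset.mem_filter.mp hz
          refine Finset.mem_erase.mpr ⟨ne_of_lt hsT, ?_⟩
          rw [← hzs]
          exact Finset.mem_image_of_mem v (Finset.mem_filter.mpr ⟨hzc, hzp⟩)
    have hcard' : (((clos μ Ω).filter fun x => 0 < v' x).image v').card ≤ n := by
      have h1 := Finset.card_le_card hsub
      have h2 : (I.erase T).card = I.card - 1 := Finset.card_erase_of_mem hTmem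
      omega
    have IH := ih v' hv'0 hcut' hcard'
    have hTs2 : 0 ≤ T ^ 2 - s ^ 2 := by nlinarith
    have hmul := mul_le_mul_of_nonneg_left ineq3 hTs2
    calc h * ∑ x ∈ bdry μ Ω, v x ^ 2 * vm μ Ω x
        = h * ∑ x ∈ bdry μ Ω, v' x ^ 2 * vm μ Ω x
          + (T ^ 2 - s ^ 2) * (h * msum μ Ω (A ∩ bdry μ Ω)) := by
          rw [eq2]; ring
      _ ≤ edgeSum μ Ω (fun x y => |v' x ^ 2 - v' y ^ 2|)
          + (T ^ 2 - s ^ 2) * cut μ Ω A := by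
          have : (T ^ 2 - s ^ 2) * (h * msum μ Ω (A ∩ bdry μ Ω))
              ≤ (T ^ 2 - s ^ 2) * cut μ Ω A := by
            calc (T ^ 2 - s ^ 2) * (h * msum μ Ω (A ∩ bdry μ Ω))
                = (T ^ 2 - s ^ 2) * (h * msum μ Ω (A ∩ bdry μ Ω)) := rfl
              _ ≤ (T ^ 2 - s ^ 2) * cut μ Ω A := hmul
          linarith
      _ = edgeSum μ Ω (fun x y => |v x ^ 2 - v y ^ 2|) := eq1.symm

end AuxD
section AuxE

variable {μ : V → V → ℝ} {Ω : Finset V}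

lemma boundary_sq_nonneg (hnn : ∀ x y, 0 ≤ μ x y) (φ : V → ℝ) (B : Finset V) :
    0 ≤ ∑ x ∈ B, φ x ^ 2 * vm μ Ω x :=
  Finset.sum_nonneg fun x _ => mul_nonneg (sq_nonneg _) (vm_nonneg hnn x)

lemma hE_nonneg (hnn : ∀ x y, 0 ≤ μ x y) : 0 ≤ hE μ Ω := by
  apply Real.sInf_nonneg
  rintro r ⟨A, _, h1, _, rfl⟩
  exact div_nonneg (cut_nonneg hnn A) h1.le

lemma mu1_nonneg (hnn : ∀ x y, 0 ≤ μ x y) {k : ℝ} (hk : 0 ≤ k) :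
    0 ≤ mu1 μ Ω k := by
  apply Real.sInf_nonneg
  rintro r ⟨φ, h1, rfl⟩
  apply div_nonneg _ h1.le
  have := boundary_sq_nonneg (Ω := Ω) hnn φ (bdry μ Ω)
  have := dirichlet_nonneg (Ω := Ω) hnn φ
  nlinarith

lemma lambda1_nonneg (hnn : ∀ x y, 0 ≤ μ x y) : 0 ≤ lambda1 μ Ω := by
  apply Real.sInf_nonneg
  rintro r ⟨u, _, _, _, rfl⟩
  exact dirichlet_nonneg hnn u

lemma hE_le (hnn : ∀ x y, 0 ≤ μ x y) {A : Finset V} (hA : A ⊆ clos μ Ω)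
    (h1 : 0 < msum μ Ω (A ∩ bdry μ Ω))
    (h2 : msum μ Ω (A ∩ bdry μ Ω) ≤ msum μ Ω (bdry μ Ω) / 2) :
    hE μ Ω * msum μ Ω (A ∩ bdry μ Ω) ≤ cut μ Ω A := by
  have hbdd : BddBelow { r : ℝ | ∃ A : Finset V, A ⊆ clos μ Ω ∧
      0 < msum μ Ω (A ∩ bdry μ Ω) ∧
      msum μ Ω (A ∩ bdry μ Ω) ≤ msum μ Ω (bdry μ Ω) / 2 ∧
      r = cut μ Ω A / msum μ Ω (A ∩ bdry μ Ω) } := by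
    refine ⟨0, ?_⟩
    rintro r ⟨A', _, h1', _, rfl⟩
    exact div_nonneg (cut_nonneg hnn A') h1'.le
  have hle : hE μ Ω ≤ cut μ Ω A / msum μ Ω (A ∩ bdry μ Ω) :=
    csInf_le hbdd ⟨A, hA, h1, h2, rfl⟩
  calc hE μ Ω * msum μ Ω (A ∩ bdry μ Ω)
      ≤ (cut μ Ω A / msum μ Ω (A ∩ bdry μ Ω)) * msum μ Ω (A ∩ bdry μ Ω) :=
        mul_le_mul_of_nonneg_right hle h1.le
    _ = cut μ Ω A := div_mul_cancel₀ _ (ne_of_gt h1)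

lemma mu1_le (hnn : ∀ x y, 0 ≤ μ x y) {k : ℝ} (hk : 0 ≤ k) (φ : V → ℝ)
    (hφ : 0 < ∑ x ∈ Ω, φ x ^ 2 * vm μ Ω x) :
    mu1 μ Ω k * (∑ x ∈ Ω, φ x ^ 2 * vm μ Ω x) ≤
      dirichlet μ Ω φ + k * ∑ x ∈ bdry μ Ω, φ x ^ 2 * vm μ Ω x := by
  have hbdd : BddBelow { r : ℝ | ∃ φ : V → ℝ, 0 < (∑ x ∈ Ω, φ x ^ 2 * vm μ Ω x) ∧
      r = (dirichlet μ Ω φ + k * ∑ x ∈ bdry μ Ω, φ x ^ 2 * vm μ Ω x) /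
        (∑ x ∈ Ω, φ x ^ 2 * vm μ Ω x) } := by
    refine ⟨0, ?_⟩
    rintro r ⟨ψ, h1, rfl⟩
    apply div_nonneg _ h1.le
    have h2 := boundary_sq_nonneg (Ω := Ω) hnn ψ (bdry μ Ω)
    have h3 := dirichlet_nonneg (Ω := Ω) hnn ψ
    nlinarith
  have hle : mu1 μ Ω k ≤
      (dirichlet μ Ω φ + k * ∑ x ∈ bdry μ Ω, φ x ^ 2 * vm μ Ω x) /
        (∑ x ∈ Ω, φ x ^ 2 * vm μ Ω x) :=
    csInf_le hbdd ⟨φ, hφ, rfl⟩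
  calc mu1 μ Ω k * (∑ x ∈ Ω, φ x ^ 2 * vm μ Ω x)
      ≤ ((dirichlet μ Ω φ + k * ∑ x ∈ bdry μ Ω, φ x ^ 2 * vm μ Ω x) /
          (∑ x ∈ Ω, φ x ^ 2 * vm μ Ω x)) * (∑ x ∈ Ω, φ x ^ 2 * vm μ Ω x) :=
        mul_le_mul_of_nonneg_right hle hφ.le
    _ = _ := div_mul_cancel₀ _ (ne_of_gt hφ)

end AuxE
section AuxF

variable {μ : V → V → ℝ} {Ω : Finset V}


/-- Pure arithmetic core of the per-sign estimate. -/
lemma arith_core (a k h m1 D b n : ℝ) (ha : 0 < a) (hk : 0 < k)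
    (hm1 : 0 ≤ m1) (hh : 0 ≤ h) (hD : 0 ≤ D) (hb : 0 ≤ b) (hn : 0 ≤ n)
    (cs2 : (h * b) ^ 2 ≤ D * (2 * n + 2 * b)) (robin : m1 * n ≤ D + k * b) :
    (2 * h * m1 - a * (k + m1)) * a / (a ^ 2 + 2 * m1) * b ≤ D := by
  have hQ : 0 < a ^ 2 + 2 * m1 := by positivity
  set c := (2 * h * m1 - a * (k + m1)) * a / (a ^ 2 + 2 * m1) with hcdef
  have hcQ : c * (a ^ 2 + 2 * m1) = (2 * h * m1 - a * (k + m1)) * a := by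
    rw [hcdef]
    exact div_mul_cancel₀ _ (ne_of_gt hQ)
  clear_value c
  rcases le_or_gt c 0 with hcneg | hcpos
  · calc c * b ≤ 0 := mul_nonpos_of_nonpos_of_nonneg hcneg hb
      _ ≤ D := hD
  rcases hb.eq_or_lt with hb0 | hbpos
  · rw [← hb0, mul_zero]
    exact hD
  by_contra hcon
  push_neg at hcon
  have key : m1 * h ^ 2 * b ^ 2 ≤ 2 * D ^ 2 + 2 * D * (k + m1) * b := by
    have k1 : m1 * ((h * b) ^ 2) ≤ m1 * (D * (2 * n + 2 * b)) :=
      mul_le_mul_of_nonneg_left cs2 hm1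
    have k2 : (2 * D) * (m1 * n) ≤ (2 * D) * (D + k * b) :=
      mul_le_mul_of_nonneg_left robin (by linarith)
    nlinarith [k1, k2]
  have hstep : m1 * h ^ 2 < 2 * c ^ 2 + 2 * c * (k + m1) := by
    have hcb : 0 < c * b := mul_pos hcpos hbpos
    have t1 : 2 * D ^ 2 < 2 * (c * b) ^ 2 := by
      nlinarith [mul_pos (sub_pos.mpr hcon) (show (0:ℝ) < c * b + D by linarith)]
    have t2 : 2 * D * (k + m1) * b ≤ 2 * (c * b) * (k + m1) * b := by
      have hkm : 0 < (k + m1) * b := mul_pos (by linarith) hbpos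
      nlinarith [mul_lt_mul_of_pos_right hcon hkm]
    have h2 : m1 * h ^ 2 * b ^ 2 < (2 * c ^ 2 + 2 * c * (k + m1)) * b ^ 2 := by
      nlinarith [key, t1, t2]
    exact (mul_lt_mul_iff_left₀ (by positivity : (0:ℝ) < b ^ 2)).mp h2
  have hQ2 : (0:ℝ) < (a ^ 2 + 2 * m1) ^ 2 := by positivity
  have hstep2 : m1 * h ^ 2 * (a ^ 2 + 2 * m1) ^ 2
      < (2 * c ^ 2 + 2 * c * (k + m1)) * (a ^ 2 + 2 * m1) ^ 2 :=
    mul_lt_mul_of_pos_right hstep hQ2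
  have hexp : (2 * c ^ 2 + 2 * c * (k + m1)) * (a ^ 2 + 2 * m1) ^ 2
      = 2 * ((2 * h * m1 - a * (k + m1)) * a) ^ 2
        + 2 * ((2 * h * m1 - a * (k + m1)) * a) * (k + m1) * (a ^ 2 + 2 * m1) := by
    have heq : (2 * c ^ 2 + 2 * c * (k + m1)) * (a ^ 2 + 2 * m1) ^ 2
        = 2 * (c * (a ^ 2 + 2 * m1)) ^ 2
          + 2 * (c * (a ^ 2 + 2 * m1)) * (k + m1) * (a ^ 2 + 2 * m1) := by ring
    rw [heq, hcQ]
  rw [hexp] at hstep2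
  nlinarith [hstep2,
    mul_nonneg hm1 (sq_nonneg (2 * h * m1 - 2 * a * m1 - 2 * a * k - a ^ 2 * h))]

/-- Per-sign estimate: D(v) ≥ c · b(v) for nonnegative v whose superlevel sets
occupy at most half of the boundary measure. -/
lemma sign_bound (hsym : ∀ x y, μ x y = μ y x) (hnn : ∀ x y, 0 ≤ μ x y)
    {a k : ℝ} (ha : 0 < a) (hk : 0 < k) (v : V → ℝ) (hv0 : ∀ x, 0 ≤ v x)
    (hsup : ∀ t : ℝ, 0 < t →
      msum μ Ω (((clos μ Ω).filter fun x => t ≤ v x) ∩ bdry μ Ω) ≤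
        msum μ Ω (bdry μ Ω) / 2) :
    (2 * hE μ Ω * mu1 μ Ω k - a * (k + mu1 μ Ω k)) * a / (a ^ 2 + 2 * mu1 μ Ω k)
      * (∑ x ∈ bdry μ Ω, v x ^ 2 * vm μ Ω x) ≤ dirichlet μ Ω v := by
  have hm1 : 0 ≤ mu1 μ Ω k := mu1_nonneg hnn hk.le
  have hh : 0 ≤ hE μ Ω := hE_nonneg hnn
  have hD : 0 ≤ dirichlet μ Ω v := dirichlet_nonneg hnn v
  have hb : 0 ≤ ∑ x ∈ bdry μ Ω, v x ^ 2 * vm μ Ω x := boundary_sq_nonneg hnn v _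
  have hn : 0 ≤ ∑ x ∈ Ω, v x ^ 2 * vm μ Ω x := boundary_sq_nonneg hnn v _
  -- coarea
  have hcut : ∀ t : ℝ, 0 < t →
      hE μ Ω * msum μ Ω (((clos μ Ω).filter fun x => t ≤ v x) ∩ bdry μ Ω) ≤
        cut μ Ω ((clos μ Ω).filter fun x => t ≤ v x) := by
    intro t ht
    rcases (msum_nonneg hnn (((clos μ Ω).filter fun x => t ≤ v x) ∩ bdry μ Ω)).eq_or_lt
      with h0 | hpos
    · rw [← h0, mul_zero]
      exact cut_nonneg hnn _
    · exact hE_le hnn ((Finset.filter_subset _ _)) hpos (hsup t ht)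
  have co : hE μ Ω * ∑ x ∈ bdry μ Ω, v x ^ 2 * vm μ Ω x ≤
      edgeSum μ Ω fun x y => |v x ^ 2 - v y ^ 2| :=
    coarea_aux hsym hnn (hE μ Ω) _ v hv0 hcut le_rfl
  -- Cauchy-Schwarz
  have cs0 := edgeSum_cauchy (Ω := Ω) hnn
    (fun x y => |v x - v y|) (fun x y => |v x + v y|)
  have e1 : edgeSum μ Ω (fun x y => |v x - v y| * |v x + v y|)
      = edgeSum μ Ω fun x y => |v x ^ 2 - v y ^ 2| :=
    edgeSum_congr fun x _ y _ => by
      rw [← abs_mul]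
      congr 1
      ring
  have e2 : edgeSum μ Ω (fun x y => |v x - v y| ^ 2) = dirichlet μ Ω v :=
    edgeSum_congr fun x _ y _ => sq_abs _
  have e3 : edgeSum μ Ω (fun x y => |v x + v y| ^ 2) ≤
      2 * (∑ x ∈ Ω, v x ^ 2 * vm μ Ω x) + 2 * ∑ x ∈ bdry μ Ω, v x ^ 2 * vm μ Ω x := by
    have step1 : edgeSum μ Ω (fun x y => |v x + v y| ^ 2) ≤
        edgeSum μ Ω (fun x y => (2 * v x ^ 2) + (2 * v y ^ 2)) := by
      apply edgeSum_mono hnn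
      intro x _ y _
      rw [sq_abs]
      nlinarith [sq_nonneg (v x - v y)]
    have step2 : edgeSum μ Ω (fun x y => (2 * v x ^ 2) + (2 * v y ^ 2))
        = (∑ x ∈ Ω, (2 * v x ^ 2) * vm μ Ω x)
          + ∑ x ∈ bdry μ Ω, (2 * v x ^ 2) * vm μ Ω x :=
      edgeSum_pair hsym hnn _
    have step3 : (∑ x ∈ Ω, (2 * v x ^ 2) * vm μ Ω x)
        + ∑ x ∈ bdry μ Ω, (2 * v x ^ 2) * vm μ Ω x
        = 2 * (∑ x ∈ Ω, v x ^ 2 * vm μ Ω x)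
          + 2 * ∑ x ∈ bdry μ Ω, v x ^ 2 * vm μ Ω x := by
      rw [Finset.mul_sum, Finset.mul_sum]
      congr 1 <;> exact Finset.sum_congr rfl fun x _ => by ring
    linarith
  have cs2 : (hE μ Ω * ∑ x ∈ bdry μ Ω, v x ^ 2 * vm μ Ω x) ^ 2 ≤
      dirichlet μ Ω v * (2 * (∑ x ∈ Ω, v x ^ 2 * vm μ Ω x)
        + 2 * ∑ x ∈ bdry μ Ω, v x ^ 2 * vm μ Ω x) := by
    have hco2 : (hE μ Ω * ∑ x ∈ bdry μ Ω, v x ^ 2 * vm μ Ω x) ^ 2 ≤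
        (edgeSum μ Ω fun x y => |v x ^ 2 - v y ^ 2|) ^ 2 :=
      pow_le_pow_left₀ (mul_nonneg hh hb) co 2
    rw [e1, e2] at cs0
    nlinarith [cs0, e3, hD]
  -- Robin eigenvalue bound
  have robin : mu1 μ Ω k * ∑ x ∈ Ω, v x ^ 2 * vm μ Ω x ≤
      dirichlet μ Ω v + k * ∑ x ∈ bdry μ Ω, v x ^ 2 * vm μ Ω x := by
    rcases hn.eq_or_lt with h0 | hpos
    · rw [← h0, mul_zero]
      have : 0 ≤ k * ∑ x ∈ bdry μ Ω, v x ^ 2 * vm μ Ω x := mul_nonneg hk.le hb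
      linarith
    · exact mu1_le hnn hk.le v hpos
  exact arith_core a k (hE μ Ω) (mu1 μ Ω k) (dirichlet μ Ω v)
    (∑ x ∈ bdry μ Ω, v x ^ 2 * vm μ Ω x) (∑ x ∈ Ω, v x ^ 2 * vm μ Ω x)
    ha hk hm1 hh hD hb hn cs2 robin

end AuxF
section AuxG

variable {μ : V → V → ℝ} {Ω : Finset V}

lemma exists_median (hnn : ∀ x y, 0 ≤ μ x y) (hBne : (bdry μ Ω).Nonempty)
    (u : V → ℝ) :
    ∃ c : ℝ,
      (∑ x ∈ (bdry μ Ω).filter fun x => c < u x, vm μ Ω x ≤ msum μ Ω (bdry μ Ω) / 2) ∧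
      (∑ x ∈ (bdry μ Ω).filter fun x => u x < c, vm μ Ω x ≤ msum μ Ω (bdry μ Ω) / 2) := by
  set M := msum μ Ω (bdry μ Ω) with hM
  have hM0 : 0 ≤ M := msum_nonneg hnn _
  set I := (bdry μ Ω).image u with hI
  have hIne : I.Nonempty := hBne.image u
  set cand := I.filter (fun t =>
    ∑ x ∈ (bdry μ Ω).filter fun x => t < u x, vm μ Ω x ≤ M / 2) with hcand
  have hcandne : cand.Nonempty := by
    refine ⟨I.max' hIne, Finset.mem_filter.mpr ⟨I.max'_mem hIne, ?_⟩⟩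
    have : ((bdry μ Ω).filter fun x => I.max' hIne < u x) = ∅ := by
      refine Finset.filter_eq_empty_iff.mpr fun x hx => ?_
      push_neg
      exact I.le_max' _ (Finset.mem_image_of_mem u hx)
    rw [this]
    simpa using by linarith
  set c := cand.min' hcandne with hc
  have hcmem : c ∈ cand := cand.min'_mem hcandne
  have hP1 : ∑ x ∈ (bdry μ Ω).filter fun x => c < u x, vm μ Ω x ≤ M / 2 :=
    (Finset.mem_filter.mp hcmem).2
  refine ⟨c, hP1, ?_⟩
  have hsplit : (∑ x ∈ (bdry μ Ω).filter fun x => u x < c, vm μ Ω x)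
      + ∑ x ∈ (bdry μ Ω).filter fun x => ¬ u x < c, vm μ Ω x = M := by
    rw [hM]
    exact Finset.sum_filter_add_sum_filter_not _ _ _
  by_cases hL : (I.filter fun t => t < c).Nonempty
  · set c' := (I.filter fun t => t < c).max' hL with hc'
    have hc'mem := (I.filter fun t => t < c).max'_mem hL
    have hc'I : c' ∈ I := (Finset.mem_filter.mp hc'mem).1
    have hc'lt : c' < c := (Finset.mem_filter.mp hc'mem).2
    have hnotP : ¬ (∑ x ∈ (bdry μ Ω).filter fun x => c' < u x, vm μ Ω x ≤ M / 2) := by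
      intro hP
      have : c' ∈ cand := Finset.mem_filter.mpr ⟨hc'I, hP⟩
      have := cand.min'_le c' this
      rw [← hc] at this
      linarith
    push_neg at hnotP
    have heq : ((bdry μ Ω).filter fun x => c' < u x)
        = (bdry μ Ω).filter fun x => ¬ u x < c := by
      refine Finset.filter_congr fun x hx => ?_
      constructor
      · intro h1
        push_neg
        by_contra h2
        push_neg at h2
        have hmem : u x ∈ I.filter fun t => t < c :=
          Finset.mem_filter.mpr ⟨Finset.mem_image_of_mem u hx, h2⟩
        have := (I.filter fun t => t < c).le_max' _ hmem
        rw [← hc'] at this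
        linarith
      · intro h1
        push_neg at h1
        linarith
    rw [heq] at hnotP
    linarith
  · have : ((bdry μ Ω).filter fun x => u x < c) = ∅ := by
      refine Finset.filter_eq_empty_iff.mpr fun x hx => ?_
      intro hcon
      exact hL ⟨u x, Finset.mem_filter.mpr ⟨Finset.mem_image_of_mem u hx, hcon⟩⟩
    rw [this]
    simpa using by linarith

lemma trunc_sq_ineq (p q : ℝ) :
    (max p 0 - max q 0) ^ 2 + (max (-p) 0 - max (-q) 0) ^ 2 ≤ (p - q) ^ 2 := by
  rcases le_total p 0 with hp | hp <;> rcases le_total q 0 with hq | hq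
  · rw [max_eq_right hp, max_eq_right hq, max_eq_left (by linarith), max_eq_left (by linarith)]
    nlinarith
  · rw [max_eq_right hp, max_eq_left hq, max_eq_left (by linarith), max_eq_right (by linarith)]
    nlinarith
  · rw [max_eq_left hp, max_eq_right hq, max_eq_right (by linarith), max_eq_left (by linarith)]
    nlinarith
  · rw [max_eq_left hp, max_eq_left hq, max_eq_right (by linarith), max_eq_right (by linarith)]
    nlinarith

/-- Main lower bound for the Rayleigh quotient of any normalized boundary data. -/
lemma main_bound (hsym : ∀ x y, μ x y = μ y x) (hnn : ∀ x y, 0 ≤ μ x y)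
    (hBne : (bdry μ Ω).Nonempty) {a k : ℝ} (ha : 0 < a) (hk : 0 < k)
    (u : V → ℝ) (hnorm : (∑ x ∈ bdry μ Ω, u x ^ 2 * vm μ Ω x) = 1)
    (hmean : (∑ x ∈ bdry μ Ω, u x * vm μ Ω x) = 0) :
    (2 * hE μ Ω * mu1 μ Ω k - a * (k + mu1 μ Ω k)) * a / (a ^ 2 + 2 * mu1 μ Ω k)
      ≤ dirichlet μ Ω u := by
  set C := (2 * hE μ Ω * mu1 μ Ω k - a * (k + mu1 μ Ω k)) * a /
    (a ^ 2 + 2 * mu1 μ Ω k) with hC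
  rcases le_or_gt C 0 with hC0 | hCpos
  · exact le_trans hC0 (dirichlet_nonneg hnn u)
  obtain ⟨c₀, hP1, hP2⟩ := exists_median hnn hBne u
  set w : V → ℝ := fun x => u x - c₀ with hw
  set wp : V → ℝ := fun x => max (w x) 0 with hwp
  set wm : V → ℝ := fun x => max (-(w x)) 0 with hwm
  have hDw : dirichlet μ Ω w = dirichlet μ Ω u :=
    edgeSum_congr fun x _ y _ => by simp only [hw]; ring
  have hwp0 : ∀ x, 0 ≤ wp x := fun x => le_max_right _ _
  have hwm0 : ∀ x, 0 ≤ wm x := fun x => le_max_right _ _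
  -- boundary norms
  have hwnorm : (∑ x ∈ bdry μ Ω, w x ^ 2 * vm μ Ω x)
      = 1 + c₀ ^ 2 * msum μ Ω (bdry μ Ω) := by
    have expand : ∀ x ∈ bdry μ Ω, w x ^ 2 * vm μ Ω x
        = u x ^ 2 * vm μ Ω x - 2 * c₀ * (u x * vm μ Ω x) + c₀ ^ 2 * vm μ Ω x := by
      intro x _
      simp only [hw]
      ring
    rw [Finset.sum_congr rfl expand]
    rw [Finset.sum_add_distrib, Finset.sum_sub_distrib, ← Finset.mul_sum, ← Finset.mul_sum]
    rw [hnorm, hmean]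
    unfold msum
    ring
  have hsqsum : (∑ x ∈ bdry μ Ω, wp x ^ 2 * vm μ Ω x)
      + ∑ x ∈ bdry μ Ω, wm x ^ 2 * vm μ Ω x
      = ∑ x ∈ bdry μ Ω, w x ^ 2 * vm μ Ω x := by
    rw [← Finset.sum_add_distrib]
    refine Finset.sum_congr rfl fun x _ => ?_
    have : wp x ^ 2 + wm x ^ 2 = w x ^ 2 := by
      simp only [hwp, hwm]
      rcases le_total 0 (w x) with h | h
      · rw [max_eq_left h, max_eq_right (by linarith)]
        ring
      · rw [max_eq_right h, max_eq_left (by linarith)]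
        ring
    nlinarith [this, vm_nonneg (Ω := Ω) hnn x]
  -- superlevel conditions
  have hsupp : ∀ t : ℝ, 0 < t →
      msum μ Ω (((clos μ Ω).filter fun x => t ≤ wp x) ∩ bdry μ Ω) ≤
        msum μ Ω (bdry μ Ω) / 2 := by
    intro t ht
    have hsub : ((clos μ Ω).filter fun x => t ≤ wp x) ∩ bdry μ Ω ⊆
        (bdry μ Ω).filter fun x => c₀ < u x := by
      intro x hx
      obtain ⟨hx1, hx2⟩ := Finset.mem_inter.mp hx
      have hwx : t ≤ wp x := (Finset.mem_filter.mp hx1).2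
      have : 0 < w x := by
        by_contra hcon
        push_neg at hcon
        have : wp x = 0 := by simp only [hwp]; exact max_eq_right hcon
        rw [this] at hwx
        linarith
      refine Finset.mem_filter.mpr ⟨hx2, ?_⟩
      simp only [hw] at this
      linarith
    calc msum μ Ω (((clos μ Ω).filter fun x => t ≤ wp x) ∩ bdry μ Ω)
        ≤ ∑ x ∈ (bdry μ Ω).filter fun x => c₀ < u x, vm μ Ω x :=
          Finset.sum_le_sum_of_subset_of_nonneg hsub fun x _ _ => vm_nonneg hnn x
      _ ≤ msum μ Ω (bdry μ Ω) / 2 := hP1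
  have hsupm : ∀ t : ℝ, 0 < t →
      msum μ Ω (((clos μ Ω).filter fun x => t ≤ wm x) ∩ bdry μ Ω) ≤
        msum μ Ω (bdry μ Ω) / 2 := by
    intro t ht
    have hsub : ((clos μ Ω).filter fun x => t ≤ wm x) ∩ bdry μ Ω ⊆
        (bdry μ Ω).filter fun x => u x < c₀ := by
      intro x hx
      obtain ⟨hx1, hx2⟩ := Finset.mem_inter.mp hx
      have hwx : t ≤ wm x := (Finset.mem_filter.mp hx1).2
      have : w x < 0 := by
        by_contra hcon
        push_neg at hcon
        have : wm x = 0 := by simp only [hwm]; exact max_eq_right (by linarith)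
        rw [this] at hwx
        linarith
      refine Finset.mem_filter.mpr ⟨hx2, ?_⟩
      simp only [hw] at this
      linarith
    calc msum μ Ω (((clos μ Ω).filter fun x => t ≤ wm x) ∩ bdry μ Ω)
        ≤ ∑ x ∈ (bdry μ Ω).filter fun x => u x < c₀, vm μ Ω x :=
          Finset.sum_le_sum_of_subset_of_nonneg hsub fun x _ _ => vm_nonneg hnn x
      _ ≤ msum μ Ω (bdry μ Ω) / 2 := hP2
  have bp := sign_bound hsym hnn ha hk wp hwp0 hsupp
  have bm := sign_bound hsym hnn ha hk wm hwm0 hsupm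
  rw [← hC] at bp bm
  -- energy splitting
  have hDsplit : dirichlet μ Ω wp + dirichlet μ Ω wm ≤ dirichlet μ Ω w := by
    have : dirichlet μ Ω wp + dirichlet μ Ω wm
        = edgeSum μ Ω fun x y => (wp x - wp y) ^ 2 + (wm x - wm y) ^ 2 :=
      (edgeSum_add _ _).symm
    rw [this]
    apply edgeSum_mono hnn
    intro x _ y _
    simp only [hwp, hwm]
    exact trunc_sq_ineq (w x) (w y)
  have hbsum : 1 ≤ (∑ x ∈ bdry μ Ω, wp x ^ 2 * vm μ Ω x)
      + ∑ x ∈ bdry μ Ω, wm x ^ 2 * vm μ Ω x := by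
    rw [hsqsum, hwnorm]
    nlinarith [msum_nonneg (Ω := Ω) hnn (bdry μ Ω), sq_nonneg c₀]
  calc C = C * 1 := (mul_one C).symm
    _ ≤ C * ((∑ x ∈ bdry μ Ω, wp x ^ 2 * vm μ Ω x)
        + ∑ x ∈ bdry μ Ω, wm x ^ 2 * vm μ Ω x) := by
        exact mul_le_mul_of_nonneg_left hbsum hCpos.le
    _ = C * (∑ x ∈ bdry μ Ω, wp x ^ 2 * vm μ Ω x)
        + C * ∑ x ∈ bdry μ Ω, wm x ^ 2 * vm μ Ω x := by ring
    _ ≤ dirichlet μ Ω wp + dirichlet μ Ω wm := add_le_add bp bm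
    _ ≤ dirichlet μ Ω w := hDsplit
    _ = dirichlet μ Ω u := hDw

end AuxG
section AuxH

variable {μ : V → V → ℝ} {Ω : Finset V}

lemma clos_erase (hx : x ∈ Ω) :
    (clos μ Ω).erase x = (Ω.erase x) ∪ bdry μ Ω := by
  show (Ω ∪ bdry μ Ω).erase x = (Ω.erase x) ∪ bdry μ Ω
  rw [Finset.erase_union_distrib,
    Finset.erase_eq_of_notMem (fun h => not_mem_Omega_of_bdry h hx)]

lemma erase_bdry_disjoint : Disjoint (Ω.erase x) (bdry μ Ω) :=
  Finset.disjoint_left.mpr fun z hz hzb =>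
    not_mem_Omega_of_bdry hzb (Finset.mem_of_mem_erase hz)

/-- Decomposition of the Dirichlet energy isolating the terms containing x ∈ Ω. -/
lemma dirichlet_decomp (hsym : ∀ x y, μ x y = μ y x) {x : V} (hx : x ∈ Ω)
    (f : V → ℝ) :
    dirichlet μ Ω f = (∑ y ∈ (clos μ Ω).erase x, μ x y * (f x - f y) ^ 2)
      + ((∑ x' ∈ Ω.erase x, ∑ y ∈ Ω.erase x, μ x' y * (f x' - f y) ^ 2) / 2
        + ∑ x' ∈ Ω.erase x, ∑ y ∈ bdry μ Ω, μ x' y * (f x' - f y) ^ 2) := by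
  unfold dirichlet edgeSum
  have e1 : ∑ x' ∈ Ω, ∑ y ∈ Ω, μ x' y * (f x' - f y) ^ 2
      = (∑ y ∈ Ω.erase x, μ x y * (f x - f y) ^ 2) * 2
        + ∑ x' ∈ Ω.erase x, ∑ y ∈ Ω.erase x, μ x' y * (f x' - f y) ^ 2 := by
    rw [← Finset.sum_erase_add Ω _ hx]
    have inner1 : ∀ x' ∈ Ω.erase x, ∑ y ∈ Ω, μ x' y * (f x' - f y) ^ 2
        = (∑ y ∈ Ω.erase x, μ x' y * (f x' - f y) ^ 2)
          + μ x' x * (f x' - f x) ^ 2 := fun x' _ =>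
      (Finset.sum_erase_add Ω _ hx).symm
    have inner2 : ∑ y ∈ Ω, μ x y * (f x - f y) ^ 2
        = (∑ y ∈ Ω.erase x, μ x y * (f x - f y) ^ 2)
          + μ x x * (f x - f x) ^ 2 := (Finset.sum_erase_add Ω _ hx).symm
    rw [Finset.sum_congr rfl inner1, inner2, Finset.sum_add_distrib]
    have swap : ∑ x' ∈ Ω.erase x, μ x' x * (f x' - f x) ^ 2
        = ∑ y ∈ Ω.erase x, μ x y * (f x - f y) ^ 2 :=
      Finset.sum_congr rfl fun y _ => by rw [hsym y x]; ring
    rw [swap]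
    have : μ x x * (f x - f x) ^ 2 = 0 := by simp
    rw [this]
    ring
  have e2 : ∑ x' ∈ Ω, ∑ y ∈ bdry μ Ω, μ x' y * (f x' - f y) ^ 2
      = (∑ y ∈ bdry μ Ω, μ x y * (f x - f y) ^ 2)
        + ∑ x' ∈ Ω.erase x, ∑ y ∈ bdry μ Ω, μ x' y * (f x' - f y) ^ 2 := by
    rw [← Finset.sum_erase_add Ω _ hx]
    ring
  have e3 : ∑ y ∈ (clos μ Ω).erase x, μ x y * (f x - f y) ^ 2
      = (∑ y ∈ Ω.erase x, μ x y * (f x - f y) ^ 2)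
        + ∑ y ∈ bdry μ Ω, μ x y * (f x - f y) ^ 2 := by
    rw [clos_erase hx, Finset.sum_union erase_bdry_disjoint]
  rw [e1, e2, e3]
  ring

lemma dirichlet_update_diff (hsym : ∀ x y, μ x y = μ y x) {x : V} (hx : x ∈ Ω)
    (u : V → ℝ) (t₁ t₂ : ℝ) :
    dirichlet μ Ω (Function.update u x t₁) - dirichlet μ Ω (Function.update u x t₂)
      = ∑ y ∈ (clos μ Ω).erase x, μ x y * ((t₁ - u y) ^ 2 - (t₂ - u y) ^ 2) := by
  have main : ∀ t : ℝ, dirichlet μ Ω (Function.update u x t)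
      = (∑ y ∈ (clos μ Ω).erase x, μ x y * (t - u y) ^ 2)
        + ((∑ x' ∈ Ω.erase x, ∑ y ∈ Ω.erase x, μ x' y * (u x' - u y) ^ 2) / 2
          + ∑ x' ∈ Ω.erase x, ∑ y ∈ bdry μ Ω, μ x' y * (u x' - u y) ^ 2) := by
    intro t
    rw [dirichlet_decomp hsym hx]
    congr 1
    · refine Finset.sum_congr rfl fun y hy => ?_
      rw [Function.update_self, Function.update_of_ne (Finset.ne_of_mem_erase hy)]
    · congr 1
      · congr 1
        refine Finset.sum_congr rfl fun x' hx' => Finset.sum_congr rfl fun y hy => ?_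
        rw [Function.update_of_ne (Finset.ne_of_mem_erase hx'),
          Function.update_of_ne (Finset.ne_of_mem_erase hy)]
      · refine Finset.sum_congr rfl fun x' hx' => Finset.sum_congr rfl fun y hy => ?_
        rw [Function.update_of_ne (Finset.ne_of_mem_erase hx'),
          Function.update_of_ne fun h => not_mem_Omega_of_bdry (h ▸ hy) hx]
  rw [main t₁, main t₂]
  have expand : ∑ y ∈ (clos μ Ω).erase x, μ x y * ((t₁ - u y) ^ 2 - (t₂ - u y) ^ 2)
      = (∑ y ∈ (clos μ Ω).erase x, μ x y * (t₁ - u y) ^ 2)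
        - ∑ y ∈ (clos μ Ω).erase x, μ x y * (t₂ - u y) ^ 2 := by
    rw [← Finset.sum_sub_distrib]
    exact Finset.sum_congr rfl fun y _ => by ring
  rw [expand]
  ring

end AuxH
section AuxI

variable {μ : V → V → ℝ} {Ω : Finset V}

lemma exists_harmonic_ext (hsym : ∀ x y, μ x y = μ y x) (hnn : ∀ x y, 0 ≤ μ x y)
    (ψ : V → ℝ) (M : ℝ) (hM : ∀ z, |ψ z| ≤ M) :
    ∃ u : V → ℝ, IsHarmonic μ Ω u ∧ ∀ z, z ∉ Ω → u z = ψ z := by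
  by_cases hV : Nonempty V
  swap
  · exact ⟨ψ, fun x _ => absurd ⟨x⟩ hV, fun z _ => rfl⟩
  obtain ⟨x₀⟩ := hV
  have hM0 : 0 ≤ M := le_trans (abs_nonneg _) (hM x₀)
  set K : Set (V → ℝ) := Set.pi Set.univ
    (fun z => if z ∈ Ω then Set.Icc (-M) M else {ψ z}) with hK
  have hKc : IsCompact K := isCompact_univ_pi fun z => by
    split
    · exact isCompact_Icc
    · exact isCompact_singleton
  have hKne : K.Nonempty := by
    refine ⟨fun z => if z ∈ Ω then 0 else ψ z, ?_⟩
    intro z _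
    by_cases hz : z ∈ Ω
    · simp only [hz, if_true]
      exact ⟨by linarith, by linarith⟩
    · simp only [hz, if_false]
      rfl
  have hcont : Continuous fun f : V → ℝ => dirichlet μ Ω f := by
    unfold dirichlet edgeSum
    apply Continuous.add
    · apply Continuous.div_const
      refine continuous_finset_sum _ fun x _ => continuous_finset_sum _ fun y _ => ?_
      exact continuous_const.mul (((continuous_apply x).sub (continuous_apply y)).pow 2)
    · refine continuous_finset_sum _ fun x _ => continuous_finset_sum _ fun y _ => ?_
      exact continuous_const.mul (((continuous_apply x).sub (continuous_apply y)).pow 2)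
  obtain ⟨u, huK, hmin⟩ := hKc.exists_isMinOn hKne hcont.continuousOn
  have humem : ∀ z, u z ∈ if z ∈ Ω then Set.Icc (-M) M else ({ψ z} : Set ℝ) :=
    fun z => huK z (Set.mem_univ z)
  have hufix : ∀ z, z ∉ Ω → u z = ψ z := by
    intro z hz
    have := humem z
    rw [if_neg hz] at this
    exact this
  have hbound : ∀ z, -M ≤ u z ∧ u z ≤ M := by
    intro z
    by_cases hz : z ∈ Ω
    · have := humem z
      rw [if_pos hz] at this
      exact ⟨this.1, this.2⟩
    · rw [hufix z hz]
      exact abs_le.mp (hM z)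
  refine ⟨u, ?_, hufix⟩
  intro x hx
  have hnum : (∑ y, μ x y * (u y - u x))
      = ∑ y ∈ (clos μ Ω).erase x, μ x y * (u y - u x) := by
    symm
    apply Finset.sum_subset (Finset.subset_univ _)
    intro y _ hy
    by_cases hyx : y = x
    · subst hyx
      simp
    · have hyc : y ∉ clos μ Ω := fun hc => hy (Finset.mem_erase.mpr ⟨hyx, hc⟩)
      rw [mu_zero_of_not_clos hsym hnn hx hyc, zero_mul]
  set A := ∑ y ∈ (clos μ Ω).erase x, μ x y with hA
  have hA0 : 0 ≤ A := Finset.sum_nonneg fun y _ => hnn x y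
  rcases hA0.eq_or_lt with hAz | hApos
  · have hzero : ∀ y ∈ (clos μ Ω).erase x, μ x y = 0 :=
      (Finset.sum_eq_zero_iff_of_nonneg fun y _ => hnn x y).mp hAz.symm
    show lap μ Ω u x = 0
    unfold lap
    rw [hnum, Finset.sum_eq_zero fun y hy => by rw [hzero y hy, zero_mul]]
    exact zero_div _
  set S := ∑ y ∈ (clos μ Ω).erase x, μ x y * u y with hS
  set t' := S / A with ht'
  have hS1 : S ≤ A * M := by
    rw [hS, hA, Finset.sum_mul]
    exact Finset.sum_le_sum fun y hy =>
      mul_le_mul_of_nonneg_left (hbound y).2 (hnn x y)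
  have hS2 : A * (-M) ≤ S := by
    rw [hS, hA, Finset.sum_mul]
    exact Finset.sum_le_sum fun y hy =>
      mul_le_mul_of_nonneg_left (hbound y).1 (hnn x y)
  have ht'mem : t' ∈ Set.Icc (-M) M := by
    constructor
    · rw [ht', le_div_iff₀ hApos]
      calc -M * A = A * (-M) := by ring
        _ ≤ S := hS2
    · rw [ht', div_le_iff₀ hApos]
      calc S ≤ A * M := hS1
        _ = M * A := by ring
  have hu'K : Function.update u x t' ∈ K := by
    intro z _
    dsimp only
    by_cases hzx : z = x
    · subst hzx
      rw [Function.update_self, if_pos hx]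
      exact ht'mem
    · rw [Function.update_of_ne hzx]
      exact humem z
  have hle : dirichlet μ Ω u ≤ dirichlet μ Ω (Function.update u x t') :=
    hmin hu'K
  have hdiff := dirichlet_update_diff hsym hx u t' (u x)
  rw [Function.update_eq_self] at hdiff
  have hAt' : S = A * t' := by
    rw [ht', mul_comm, div_mul_cancel₀ _ (ne_of_gt hApos)]
  have hexp : ∑ y ∈ (clos μ Ω).erase x, μ x y * ((t' - u y) ^ 2 - (u x - u y) ^ 2)
      = (t' ^ 2 - (u x) ^ 2) * A - 2 * (t' - u x) * S := by
    have : ∀ y ∈ (clos μ Ω).erase x,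
        μ x y * ((t' - u y) ^ 2 - (u x - u y) ^ 2)
          = (t' ^ 2 - (u x) ^ 2) * μ x y - 2 * (t' - u x) * (μ x y * u y) :=
      fun y _ => by ring
    rw [Finset.sum_congr rfl this, Finset.sum_sub_distrib, ← Finset.mul_sum,
      ← Finset.mul_sum, hA, hS]
  rw [hexp] at hdiff
  have hdle : 0 ≤ dirichlet μ Ω (Function.update u x t') - dirichlet μ Ω u := by
    linarith
  rw [hdiff, hAt'] at hdle
  have hsq : (u x - t') ^ 2 ≤ 0 := by nlinarith
  have hux : u x = t' := by
    have h1 : (u x - t') ^ 2 = 0 := le_antisymm hsq (sq_nonneg _)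
    have h2 : u x - t' = 0 := by
      exact pow_eq_zero_iff (by norm_num) |>.mp h1
    linarith
  show lap μ Ω u x = 0
  unfold lap
  rw [hnum]
  have hfin : ∑ y ∈ (clos μ Ω).erase x, μ x y * (u y - u x) = S - A * u x := by
    have : ∀ y ∈ (clos μ Ω).erase x,
        μ x y * (u y - u x) = μ x y * u y - μ x y * u x := fun y _ => by ring
    rw [Finset.sum_congr rfl this, Finset.sum_sub_distrib, hS, hA, Finset.sum_mul]
  rw [hfin, hux, ← hAt', sub_self, zero_div]

end AuxI
section AuxJ

variable {μ : V → V → ℝ} {Ω : Finset V}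

lemma exists_harmonic_normalized (hsym : ∀ x y, μ x y = μ y x)
    (hnn : ∀ x y, 0 ≤ μ x y) (hcard : 2 ≤ (bdry μ Ω).card) :
    ∃ u : V → ℝ, IsHarmonic μ Ω u ∧
      (∑ x ∈ bdry μ Ω, u x ^ 2 * vm μ Ω x) = 1 ∧
      (∑ x ∈ bdry μ Ω, u x * vm μ Ω x) = 0 := by
  obtain ⟨p, hp, q, hq, hpq⟩ := Finset.one_lt_card.mp hcard
  set mp := vm μ Ω p with hmpd
  set mq := vm μ Ω q with hmqd
  have hmppos : 0 < mp := vm_pos_bdry hnn hp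
  have hmqpos : 0 < mq := vm_pos_bdry hnn hq
  set α := Real.sqrt (mq / (mp * (mp + mq))) with hα
  set β := -Real.sqrt (mp / (mq * (mp + mq))) with hβ
  set ψ : V → ℝ := fun z => if z = p then α else if z = q then β else 0 with hψ
  have hψbound : ∀ z, |ψ z| ≤ |α| + |β| := by
    intro z
    simp only [hψ]
    split_ifs
    · linarith [abs_nonneg β]
    · linarith [abs_nonneg α]
    · simp [abs_nonneg α, abs_nonneg β]
      positivity
  obtain ⟨u, huh, hufix⟩ := exists_harmonic_ext hsym hnn ψ (|α| + |β|) hψbound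
  have huψ : ∀ z ∈ bdry μ Ω, u z = ψ z := fun z hz =>
    hufix z (not_mem_Omega_of_bdry hz)
  have pairsum : ∀ g : V → ℝ, (∀ z ∈ bdry μ Ω, z ≠ p → z ≠ q → g z = 0) →
      ∑ z ∈ bdry μ Ω, g z = g p + g q := by
    intro g hg
    have hsub : ({p, q} : Finset V) ⊆ bdry μ Ω := by
      intro z hz
      rcases Finset.mem_insert.mp hz with rfl | hz
      · exact hp
      · rw [Finset.mem_singleton.mp hz]
        exact hq
    rw [← Finset.sum_subset hsub]
    · rw [Finset.sum_pair hpq]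
    · intro z hz hz2
      refine hg z hz (fun h => hz2 ?_) (fun h => hz2 ?_)
      · simp [h]
      · simp [h]
  have hup : u p = α := by
    rw [huψ p hp]
    simp [hψ]
  have huq : u q = β := by
    rw [huψ q hq]
    simp only [hψ]
    rw [if_neg (Ne.symm hpq)]
    simp
  have huz : ∀ z ∈ bdry μ Ω, z ≠ p → z ≠ q → u z = 0 := by
    intro z hz h1 h2
    rw [huψ z hz]
    simp only [hψ]
    rw [if_neg h1, if_neg h2]
  have hαsq : α ^ 2 = mq / (mp * (mp + mq)) := by
    rw [hα]
    exact Real.sq_sqrt (by positivity)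
  have hβsq : β ^ 2 = mp / (mq * (mp + mq)) := by
    rw [hβ, neg_sq]
    exact Real.sq_sqrt (by positivity)
  have hnormval : ∑ x ∈ bdry μ Ω, u x ^ 2 * vm μ Ω x = α ^ 2 * mp + β ^ 2 * mq := by
    rw [pairsum (fun z => u z ^ 2 * vm μ Ω z)
      (fun z hz h1 h2 => by
        show u z ^ 2 * vm μ Ω z = 0
        rw [huz z hz h1 h2]; ring), hup, huq, ← hmpd, ← hmqd]
  have hmeanval : ∑ x ∈ bdry μ Ω, u x * vm μ Ω x = α * mp + β * mq := by
    rw [pairsum (fun z => u z * vm μ Ω z)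
      (fun z hz h1 h2 => by
        show u z * vm μ Ω z = 0
        rw [huz z hz h1 h2]; ring), hup, huq, ← hmpd, ← hmqd]
  have h1 : α ^ 2 * mp + β ^ 2 * mq = 1 := by
    rw [hαsq, hβsq]
    field_simp
    ring
  have h2 : α * mp + β * mq = 0 := by
    have hnn1 : 0 ≤ α * mp := mul_nonneg (Real.sqrt_nonneg _) hmppos.le
    have e1 : α * mp = Real.sqrt (mp * mq / (mp + mq)) := by
      have hsq : (α * mp) ^ 2 = mp * mq / (mp + mq) := by
        rw [mul_pow, hαsq]
        field_simp
      rw [← Real.sqrt_sq hnn1, hsq]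
    have hnn2 : 0 ≤ -(β * mq) := by
      rw [hβ]
      have : 0 ≤ Real.sqrt (mp / (mq * (mp + mq))) * mq :=
        mul_nonneg (Real.sqrt_nonneg _) hmqpos.le
      linarith
    have e2 : -(β * mq) = Real.sqrt (mp * mq / (mp + mq)) := by
      have hsq : (-(β * mq)) ^ 2 = mp * mq / (mp + mq) := by
        have : (-(β * mq)) ^ 2 = β ^ 2 * mq ^ 2 := by ring
        rw [this, hβsq]
        field_simp
      rw [← Real.sqrt_sq hnn2, hsq]
    linear_combination e1 - e2
  exact ⟨u, huh, by rw [hnormval]; exact h1, by rw [hmeanval]; exact h2⟩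

end AuxJ

/-- Theorem 1.3 (Escobar-type Cheeger estimate):
λ₁(Ω) ≥ ((2 h_E(Ω̃) μ₁(k) − a(k + μ₁(k))) a)/(a² + 2 μ₁(k)) for all a, k > 0. -/
theorem stmt_1 (μ : V → V → ℝ) (Ω : Finset V)
    (hsym : ∀ x y, μ x y = μ y x) (hnn : ∀ x y, 0 ≤ μ x y)
    (hconn : TilConnected μ Ω) (hcard : 2 ≤ (bdry μ Ω).card) :
    ∀ a k : ℝ, 0 < a → 0 < k →
      lambda1 μ Ω ≥
        (2 * hE μ Ω * mu1 μ Ω k - a * (k + mu1 μ Ω k)) * a / (a ^ 2 + 2 * mu1 μ Ω k) := by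
  intro a k ha hk
  rw [ge_iff_le]
  rcases le_or_gt
    ((2 * hE μ Ω * mu1 μ Ω k - a * (k + mu1 μ Ω k)) * a / (a ^ 2 + 2 * mu1 μ Ω k)) 0
    with hC | _
  · exact le_trans hC (lambda1_nonneg hnn)
  · have hBne : (bdry μ Ω).Nonempty := Finset.card_pos.mp (by omega)
    obtain ⟨u₀, hh0, hn0, hm0⟩ := exists_harmonic_normalized hsym hnn hcard
    unfold lambda1
    refine le_csInf ?_ ?_
    · exact ⟨dirichlet μ Ω u₀, ⟨u₀, hh0, hn0, hm0, rfl⟩⟩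
    · rintro r ⟨u, _, hnorm, hmean, rfl⟩
      exact main_bound hsym hnn hBne ha hk u hnorm hmean
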